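/- Let G be a game with no cycle of total weight zero, let F be a set of vertices containing N = N_G such that the supΣ^N-value is finite on F, let H be the subgame obtained by removing F from G (assumed to be a subgame), let φ_H be a reducing potential for H, and let H^+ = ZP_{φ_H} be nonempty. If there is no edge from H^+ ∩ V_Min to F, then every vertex of H^+ has supΣ^N-value equal to +∞ in G (in particular supΣ-value +∞ and MP-value > 0). -/

import Mathlib

/-!
Basic definitions for mean-payoff games: games, infinite paths, positional
strategies, the valuations MP, supΣ^X and infΣ^X, values of vertices,
zones N, P, ZN, ZP (also relative to a sub-arena), reduced games,
potentials and potential reductions, traps.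
-/

/-- A game: a sinkless directed graph with integer weights, whose vertices are
partitioned into Min-vertices (`IsMin`) and Max-vertices (`¬ IsMin`). -/
structure MPGame (V : Type*) where
  E : V → V → Prop
  w : V → V → ℤ
  IsMin : V → Prop
  sinkless : ∀ v, ∃ v', E v v'

namespace MPGame

variable {V : Type*}

/-- An infinite path in a game. -/
structure Path (G : MPGame V) where
  vert : ℕ → V
  adj : ∀ i, G.E (vert i) (vert (i + 1))

/-- The sum of the weights of the first `k` edges of a path. -/
def Path.wsum {G : MPGame V} (π : G.Path) (k : ℕ) : ℤ :=
  ∑ i ∈ Finset.range k, G.w (π.vert i) (π.vert (i + 1))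

/-- The tail of a path (drop the first vertex). -/
def Path.tail {G : MPGame V} (π : G.Path) : G.Path :=
  ⟨fun i => π.vert (i + 1), fun i => π.adj (i + 1)⟩

/-- A positional strategy `σ : V → V` is legal if it always follows an edge. -/
def Legal (G : MPGame V) (σ : V → V) : Prop := ∀ v, G.E v (σ v)

/-- Consistency of a path with a positional Min-strategy. -/
def Path.ConsMin {G : MPGame V} (π : G.Path) (σ : V → V) : Prop :=
  ∀ i, G.IsMin (π.vert i) → π.vert (i + 1) = σ (π.vert i)

/-- Consistency of a path with a positional Max-strategy. -/
def Path.ConsMax {G : MPGame V} (π : G.Path) (τ : V → V) : Prop :=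
  ∀ i, ¬ G.IsMin (π.vert i) → π.vert (i + 1) = τ (π.vert i)

/-- The mean-payoff valuation `MP(π) = limsup_k (1/k) ∑_{i<k} w_i`. -/
noncomputable def MP {G : MPGame V} (π : G.Path) : EReal :=
  Filter.limsup (fun k => (((π.wsum k : ℝ) / (k : ℝ)) : EReal)) Filter.atTop

/-- `supΣ^X(π) = sup_{k ≤ n_X} ∑_{i<k} w_i`, where `n_X` is the first hitting
time of `X` (all `k` if `X` is never hit). -/
noncomputable def supSigma {G : MPGame V} (X : Set V) (π : G.Path) : EReal :=
  ⨆ k : {k : ℕ // ∀ i < k, π.vert i ∉ X}, ((π.wsum k.1 : ℝ) : EReal)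

/-- `infΣ^X(π) = inf_{k ≤ n_X} ∑_{i<k} w_i`. -/
noncomputable def infSigma {G : MPGame V} (X : Set V) (π : G.Path) : EReal :=
  ⨅ k : {k : ℕ // ∀ i < k, π.vert i ∉ X}, ((π.wsum k.1 : ℝ) : EReal)

/-- `inf_σ sup_{π ⊨ σ, π from v} val(π)`, over legal positional Min-strategies. -/
noncomputable def minVal (G : MPGame V) (val : G.Path → EReal) (v : V) : EReal :=
  ⨅ σ : {σ : V → V // G.Legal σ},
    ⨆ π : {π : G.Path // π.vert 0 = v ∧ π.ConsMin σ.1}, val π.1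

/-- `sup_τ inf_{π ⊨ τ, π from v} val(π)`, over legal positional Max-strategies. -/
noncomputable def maxVal (G : MPGame V) (val : G.Path → EReal) (v : V) : EReal :=
  ⨆ τ : {τ : V → V // G.Legal τ},
    ⨅ π : {π : G.Path // π.vert 0 = v ∧ π.ConsMax τ.1}, val π.1

/-- The MP-value of a vertex. -/
noncomputable def MPval (G : MPGame V) (v : V) : EReal := G.minVal MP v

/-- The `supΣ^X`-value of a vertex. -/
noncomputable def supSigmaVal (G : MPGame V) (X : Set V) (v : V) : EReal :=
  G.minVal (supSigma X) v

/-- The `infΣ^X`-value of a vertex. -/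
noncomputable def infSigmaVal (G : MPGame V) (X : Set V) (v : V) : EReal :=
  G.minVal (infSigma X) v

/-- `G` has no cycle of total weight zero: no path repeats a vertex with the
same partial sum of weights. -/
def NoZeroCycle (G : MPGame V) : Prop :=
  ∀ (π : G.Path) (i j : ℕ), i < j → π.vert i = π.vert j → π.wsum i ≠ π.wsum j

/-- The zone `N` of the subgame of `G` induced on `D`: vertices whose
immediately optimal edges (within `D`) have weight `< 0`. -/
def NsetOn (G : MPGame V) (D : Set V) : Set V :=
  {v | v ∈ D ∧ ((G.IsMin v ∧ ∃ v' ∈ D, G.E v v' ∧ G.w v v' < 0) ∨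
      (¬ G.IsMin v ∧ ∀ v' ∈ D, G.E v v' → G.w v v' < 0))}

/-- The zone `P` of the subgame of `G` induced on `D`. -/
def PsetOn (G : MPGame V) (D : Set V) : Set V :=
  {v | v ∈ D ∧ ((¬ G.IsMin v ∧ ∃ v' ∈ D, G.E v v' ∧ 0 < G.w v v') ∨
      (G.IsMin v ∧ ∀ v' ∈ D, G.E v v' → 0 < G.w v v'))}

/-- The zone `N` of `G`. -/
def Nset (G : MPGame V) : Set V := G.NsetOn Set.univ

/-- The zone `P` of `G`. -/
def Pset (G : MPGame V) : Set V := G.PsetOn Set.univ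

/-- The zone `ZN` of the subgame of `G` induced on `D`: vertices from which
Min can force that an edge of weight `< 0` is visited before any edge of
weight `> 0` (staying within `D`). -/
inductive ZNr (G : MPGame V) (D : Set V) : V → Prop
  | minNeg (v v' : V) : v ∈ D → G.IsMin v → v' ∈ D → G.E v v' → G.w v v' < 0 →
      ZNr G D v
  | minZero (v v' : V) : v ∈ D → G.IsMin v → v' ∈ D → G.E v v' → G.w v v' = 0 →
      ZNr G D v' → ZNr G D v
  | max (v : V) : v ∈ D → ¬ G.IsMin v →
      (∀ v' ∈ D, G.E v v' → G.w v v' ≤ 0) →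
      (∀ v', v' ∈ D → G.E v v' → G.w v v' = 0 → ZNr G D v') →
      ZNr G D v

/-- The zone `ZP` of the subgame of `G` induced on `D`. -/
inductive ZPr (G : MPGame V) (D : Set V) : V → Prop
  | maxPos (v v' : V) : v ∈ D → ¬ G.IsMin v → v' ∈ D → G.E v v' → 0 < G.w v v' →
      ZPr G D v
  | maxZero (v v' : V) : v ∈ D → ¬ G.IsMin v → v' ∈ D → G.E v v' → G.w v v' = 0 →
      ZPr G D v' → ZPr G D v
  | min (v : V) : v ∈ D → G.IsMin v →
      (∀ v' ∈ D, G.E v v' → 0 ≤ G.w v v') →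
      (∀ v', v' ∈ D → G.E v v' → G.w v v' = 0 → ZPr G D v') →
      ZPr G D v

/-- The zone `ZN` of `G`. -/
def ZN (G : MPGame V) : V → Prop := G.ZNr Set.univ

/-- The zone `ZP` of `G`. -/
def ZP (G : MPGame V) : V → Prop := G.ZPr Set.univ

/-- The subgame of `G` induced on `D` is reduced: from every vertex of `ZN`,
Min can force that the first edge visited has weight `≤ 0` and leads into
`ZN`, and symmetrically for `ZP` and Max. -/
def ReducedOn (G : MPGame V) (D : Set V) : Prop :=
  (∀ v, G.ZNr D v →
     (G.IsMin v → ∃ v' ∈ D, G.E v v' ∧ G.w v v' ≤ 0 ∧ G.ZNr D v') ∧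
     (¬ G.IsMin v → ∀ v' ∈ D, G.E v v' → G.w v v' ≤ 0 ∧ G.ZNr D v')) ∧
  (∀ v, G.ZPr D v →
     (¬ G.IsMin v → ∃ v' ∈ D, G.E v v' ∧ 0 ≤ G.w v v' ∧ G.ZPr D v') ∧
     (G.IsMin v → ∀ v' ∈ D, G.E v v' → 0 ≤ G.w v v' ∧ G.ZPr D v'))

/-- `G` is reduced. -/
def Reduced (G : MPGame V) : Prop := G.ReducedOn Set.univ

/-- The subgame of `G` induced on `D` is positively reduced: `ZN = ∅`. -/
def PosReducedOn (G : MPGame V) (D : Set V) : Prop := ∀ v, ¬ G.ZNr D v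

/-- `A` is a trap for Min: a sinkless subgraph from which Min cannot escape. -/
def TrapForMin (G : MPGame V) (A : Set V) : Prop :=
  (∀ v ∈ A, ∃ v' ∈ A, G.E v v') ∧
  ∀ v ∈ A, G.IsMin v → ∀ v', G.E v v' → v' ∈ A

/-- `A` is a trap for Max: a sinkless subgraph from which Max cannot escape. -/
def TrapForMax (G : MPGame V) (A : Set V) : Prop :=
  (∀ v ∈ A, ∃ v' ∈ A, G.E v v') ∧
  ∀ v ∈ A, ¬ G.IsMin v → ∀ v', G.E v v' → v' ∈ A

/-- The potential reduction of `G` by the potential `φ`. -/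
def pot (G : MPGame V) (φ : V → ℤ) : MPGame V where
  E := G.E
  w := fun v v' => G.w v v' + φ v' - φ v
  IsMin := G.IsMin
  sinkless := G.sinkless

end MPGame

namespace MPGameAux

open MPGame

variable {V : Type*}

lemma ZPr_mem {G : MPGame V} {D : Set V} {v : V} (h : G.ZPr D v) : v ∈ D := by
  cases h <;> assumption

/-- Construction of a path consistent with any Min strategy, staying in the
ZP-zone of the potential-reduced subgame, with nonnegative reduced weights. -/
lemma exists_path {G : MPGame V} {F : Set V} {φH : V → ℤ}
    (hred : (G.pot φH).ReducedOn Fᶜ)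
    (hnoesc : ∀ u u', (G.pot φH).ZPr Fᶜ u → G.IsMin u → G.E u u' → u' ∉ F)
    (σ : V → V) (hσ : G.Legal σ) (v : V) (hv : (G.pot φH).ZPr Fᶜ v) :
    ∃ π : G.Path, π.vert 0 = v ∧ π.ConsMin σ ∧
      (∀ i, π.vert i ∈ Fᶜ) ∧
      (∀ i, 0 ≤ G.w (π.vert i) (π.vert (i+1)) + φH (π.vert (i+1)) - φH (π.vert i)) := by
  classical
  have hstep : ∀ u : V, (G.pot φH).ZPr Fᶜ u → ∃ u', (G.pot φH).ZPr Fᶜ u' ∧ G.E u u' ∧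
      0 ≤ G.w u u' + φH u' - φH u ∧ (G.IsMin u → u' = σ u) := by
    intro u hu
    by_cases h : G.IsMin u
    · have hmem : σ u ∈ Fᶜ := hnoesc u (σ u) hu h (hσ u)
      have h2 := (hred.2 u hu).2 h (σ u) hmem (hσ u)
      exact ⟨σ u, h2.2, hσ u, h2.1, fun _ => rfl⟩
    · obtain ⟨u', hu'D, hE, hw, hZ⟩ := (hred.2 u hu).1 h
      exact ⟨u', hZ, hE, hw, fun hm => absurd hm h⟩
  choose nxt hZ hE hw hmin using hstep
  let f : ℕ → {u : V // (G.pot φH).ZPr Fᶜ u} := fun k =>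
    Nat.rec ⟨v, hv⟩ (fun _ p => ⟨nxt p.1 p.2, hZ p.1 p.2⟩) k
  have hfs : ∀ i, (f (i+1)).1 = nxt (f i).1 (f i).2 := fun i => rfl
  refine ⟨⟨fun i => (f i).1, fun i => by
    have h := hE (f i).1 (f i).2; rwa [← hfs i] at h⟩, rfl, ?_, ?_, ?_⟩
  · intro i hi
    show (f (i+1)).1 = σ (f i).1
    rw [hfs]; exact hmin _ _ hi
  · intro i
    exact ZPr_mem (f i).2
  · intro i
    show 0 ≤ G.w (f i).1 (f (i+1)).1 + φH (f (i+1)).1 - φH (f i).1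
    rw [hfs]; exact hw _ _

/-- The main quantitative facts about a path all of whose reduced weights are
nonnegative, in a game with no zero cycle: partial sums are unbounded and the
mean payoff is at least `1/(2·|V|)`. -/
lemma main_path [Fintype V] {G : MPGame V} (hz : G.NoZeroCycle) (φ : V → ℤ)
    (π : G.Path)
    (hw : ∀ i, 0 ≤ G.w (π.vert i) (π.vert (i+1)) + φ (π.vert (i+1)) - φ (π.vert i)) :
    (∀ r : ℤ, ∃ k, r ≤ π.wsum k) ∧
    ((1 / (2 * (Fintype.card V : ℝ)) : ℝ) : EReal) ≤ MP π := by
  classical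
  haveI : Nonempty V := ⟨π.vert 0⟩
  set n := Fintype.card V with hn
  have hnpos : 0 < n := Fintype.card_pos
  set S : ℕ → ℤ := fun k => π.wsum k + (φ (π.vert k) - φ (π.vert 0)) with hS
  have hstep : ∀ k, S k ≤ S (k+1) := by
    intro k
    have h1 : π.wsum (k+1) = π.wsum k + G.w (π.vert k) (π.vert (k+1)) := by
      simp [Path.wsum, Finset.sum_range_succ]
    have := hw k
    simp only [hS, h1]
    omega
  have hmono : Monotone S := monotone_nat_of_le_succ hstep
  have hgrow : ∀ k, S k + 1 ≤ S (k + n) := by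
    intro k
    obtain ⟨a, b, hab, heq⟩ := Fintype.exists_ne_map_eq_of_card_lt
      (fun i : Fin (n+1) => π.vert (k + i)) (by simp; omega)
    have key : ∀ i j : ℕ, i < j → j ≤ n → π.vert (k + i) = π.vert (k + j) →
        S k + 1 ≤ S (k + n) := by
      intro i j hij hjn heqq
      have hne := hz π (k + i) (k + j) (by omega) heqq
      have hSle : S (k + i) ≤ S (k + j) := hmono (by omega)
      have hdiff : S (k + j) - S (k + i) = π.wsum (k + j) - π.wsum (k + i) := by
        simp only [hS]; rw [heqq]; ring
      have h2 : S k ≤ S (k + i) := hmono (by omega)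
      have h3 : S (k + j) ≤ S (k + n) := hmono (by omega)
      omega
    have hvne : (a : ℕ) ≠ (b : ℕ) := fun h => hab (Fin.ext h)
    have ha := a.isLt
    have hb := b.isLt
    rcases Nat.lt_or_ge (a : ℕ) (b : ℕ) with h | h
    · exact key a b h (by omega) heq
    · exact key b a (by omega) (by omega) heq.symm
  have hSm : ∀ m : ℕ, (m : ℤ) ≤ S (m * n) := by
    intro m
    induction m with
    | zero => simp [hS, Path.wsum]
    | succ m ih =>
        have := hgrow (m * n)
        have he : (m + 1) * n = m * n + n := by ring
        rw [he]
        push_cast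
        omega
  have hSk : ∀ k : ℕ, ((k / n : ℕ) : ℤ) ≤ S k := fun k =>
    le_trans (hSm (k / n)) (hmono (Nat.div_mul_le_self k n))
  obtain ⟨u0, hu0⟩ := Finite.exists_max φ
  have hwlb : ∀ k : ℕ, ((k / n : ℕ) : ℤ) - (φ u0 - φ (π.vert 0)) ≤ π.wsum k := by
    intro k
    have h1 := hSk k
    have h2 := hu0 (π.vert k)
    simp only [hS] at h1
    omega
  constructor
  · intro r
    refine ⟨(r + (φ u0 - φ (π.vert 0))).toNat * n, ?_⟩
    have h1 := hwlb ((r + (φ u0 - φ (π.vert 0))).toNat * n)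
    rw [Nat.mul_div_cancel _ hnpos] at h1
    have h2 := Int.self_le_toNat (r + (φ u0 - φ (π.vert 0)))
    omega
  · -- mean payoff bound
    set C : ℤ := φ u0 - φ (π.vert 0) with hC
    set nR : ℝ := (n : ℝ) with hnR
    have hnRpos : 0 < nR := by positivity
    obtain ⟨k0, hk0⟩ := exists_nat_ge (2 * nR * (1 + (C : ℝ)))
    have hEv : ∀ᶠ k in Filter.atTop,
        ((1 / (2 * nR) : ℝ) : EReal) ≤ (((π.wsum k : ℝ) / (k : ℝ) : ℝ) : EReal) := by
      rw [Filter.eventually_atTop]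
      refine ⟨max k0 1, fun k hk => ?_⟩
      have hk1 : 1 ≤ k := le_trans (le_max_right _ _) hk
      have hkpos : (0:ℝ) < (k:ℝ) := by exact_mod_cast hk1
      have hkC : 2 * nR * (1 + (C : ℝ)) ≤ (k : ℝ) := by
        refine le_trans hk0 ?_
        exact_mod_cast le_trans (le_max_left _ _) hk
      rw [EReal.coe_le_coe_iff, le_div_iff₀ hkpos]
      -- integer facts
      have h1 : ((k / n : ℕ) : ℤ) - C ≤ π.wsum k := hwlb k
      have h2 : k < (k / n + 1) * n := by
        have := Nat.div_add_mod k n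
        have := Nat.mod_lt k hnpos
        nlinarith [Nat.div_add_mod k n, Nat.mod_lt k hnpos]
      set m : ℕ := k / n with hm
      have h1R : ((m : ℝ)) - (C : ℝ) ≤ (π.wsum k : ℝ) := by exact_mod_cast h1
      have h2R : (k : ℝ) < ((m : ℝ) + 1) * nR := by rw [hnR]; exact_mod_cast h2
      -- want : 1/(2 nR) * k ≤ wsum k
      rw [div_mul_eq_mul_div, one_mul, div_le_iff₀ (by positivity : (0:ℝ) < 2 * nR)]
      nlinarith [h1R, h2R, hkC, hnRpos]
    refine Filter.le_limsup_of_frequently_le (hEv.frequently) ?_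
    exact Filter.isBounded_le_of_top

/-- supΣ^X-value is ⊤ on paths avoiding `X` with unbounded partial sums. -/
lemma supSigma_top {G : MPGame V} (X : Set V) (π : G.Path)
    (hX : ∀ i, π.vert i ∉ X)
    (hub : ∀ r : ℤ, ∃ k : ℕ, r ≤ π.wsum k) :
    supSigma X π = ⊤ := by
  rw [supSigma, iSup_eq_top]
  intro b hb
  induction b with
  | bot => exact ⟨⟨0, fun i hi => absurd hi (Nat.not_lt_zero i)⟩, EReal.bot_lt_coe _⟩
  | coe r =>
      obtain ⟨k, hk⟩ := hub (⌈r⌉ + 1)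
      refine ⟨⟨k, fun i _ => hX i⟩, ?_⟩
      have h1 : r < ((π.wsum k : ℤ) : ℝ) := by
        have h2 := Int.le_ceil r
        have h3 : ((⌈r⌉ : ℝ) + 1) ≤ ((π.wsum k : ℤ) : ℝ) := by exact_mod_cast hk
        linarith
      exact_mod_cast h1
  | top => simp at hb

end MPGameAux

open MPGame in
/-- with `F ⊇ N`, `g` the finite `supΣ^N`-values on `F`,
`H = G ∖ F` a subgame with reducing potential `φ_H` and `H⁺ = ZP_{φ_H}`
nonempty, if there is no edge from `H⁺ ∩ V_Min` to `F` then every vertex of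
`H⁺` has `supΣ^N`-value `+∞` in `G` (in particular `supΣ`-value `+∞` and
MP-value `> 0`). -/
theorem statement17 {V : Type*} [Fintype V] (G : MPGame V)
    (hz : G.NoZeroCycle)
    (F : Set V) (hNF : G.Nset ⊆ F)
    (g : V → ℤ) (hg : ∀ u ∈ F, G.supSigmaVal G.Nset u = ((g u : ℝ) : EReal))
    (hsub : ∀ u ∈ Fᶜ, ∃ u' ∈ Fᶜ, G.E u u')
    (φH : V → ℤ) (hred : (G.pot φH).ReducedOn Fᶜ)
    (hne : ∃ u, (G.pot φH).ZPr Fᶜ u)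
    (hnoesc : ∀ u u', (G.pot φH).ZPr Fᶜ u → G.IsMin u → G.E u u' → u' ∉ F) :
    ∀ v, (G.pot φH).ZPr Fᶜ v →
      G.supSigmaVal G.Nset v = ⊤ ∧ G.supSigmaVal ∅ v = ⊤ ∧ 0 < G.MPval v := by
  intro v hv
  classical
  haveI : Nonempty V := ⟨v⟩
  set c : EReal := ((1 / (2 * (Fintype.card V : ℝ)) : ℝ) : EReal) with hc
  have key : ∀ σ : {σ : V → V // G.Legal σ}, ∃ π : G.Path,
      π.vert 0 = v ∧ π.ConsMin σ.1 ∧ (∀ i, π.vert i ∈ Fᶜ) ∧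
      (∀ r : ℤ, ∃ k, r ≤ π.wsum k) ∧ c ≤ MPGame.MP π := by
    rintro ⟨σ, hσ⟩
    obtain ⟨π, hπ0, hπc, hπF, hπw⟩ := MPGameAux.exists_path hred hnoesc σ hσ v hv
    obtain ⟨hub, hmp⟩ := MPGameAux.main_path hz φH π hπw
    exact ⟨π, hπ0, hπc, hπF, hub, hmp⟩
  have hval : ∀ X : Set V, X ⊆ F → G.supSigmaVal X v = ⊤ := by
    intro X hXF
    rw [eq_top_iff, MPGame.supSigmaVal, MPGame.minVal]
    refine le_iInf fun σ => ?_
    obtain ⟨π, hπ0, hπc, hπF, hub, _⟩ := key σ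
    refine le_trans ?_ (le_iSup _ ⟨π, hπ0, hπc⟩)
    rw [MPGameAux.supSigma_top X π (fun i hi => hπF i (hXF hi)) hub]
  refine ⟨hval _ (fun u hu => hNF hu), hval ∅ (Set.empty_subset F), ?_⟩
  have hcpos : (0 : EReal) < c := by
    rw [hc]
    exact_mod_cast (by positivity : (0:ℝ) < 1 / (2 * (Fintype.card V : ℝ)))
  refine lt_of_lt_of_le hcpos ?_
  rw [MPGame.MPval, MPGame.minVal]
  refine le_iInf fun σ => ?_
  obtain ⟨π, hπ0, hπc, _, _, hmp⟩ := key σ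
  exact le_trans hmp (le_iSup (fun π : {π : G.Path // π.vert 0 = v ∧ π.ConsMin σ.1} =>
    MPGame.MP π.1) ⟨π, hπ0, hπc⟩)
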